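/- arXiv:1308.5493 — 5 statements merged into one kernel-verified Lean document; each statement's English description precedes it below -/
import Mathlib

section
/- Suppose R_0 = (β/(ρ+β))(α_S/μ) ∑_{k≥0} k(k-1) p_k ≤ 1, and either p_1 > 0, ρ > 0, or μ_R > 0. Let h(θ) = μθ - α_S ∑ k θ^{k-1} p_k - μ_R - ρμ(1-θ)/β with h(1) = 0. Then h(θ) < 0 for all θ ∈ (0,1). -/
open scoped BigOperators

lemma sirGeom_le (θ : ℝ) (h0 : 0 ≤ θ) (h1 : θ ≤ 1) : ∀ n : ℕ, 1 - θ ^ n ≤ n * (1 - θ) := by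
  intro n
  induction n with
  | zero => simp
  | succ m ih =>
    have hm : θ ^ m ≤ 1 := pow_le_one₀ h0 h1
    have h2 : θ * (1 - θ ^ m) ≤ 1 * (1 - θ ^ m) :=
      mul_le_mul_of_nonneg_right h1 (by linarith)
    have hps : θ ^ (m + 1) = θ * θ ^ m := by ring
    push_cast at ih ⊢
    rw [hps]
    nlinarith

lemma sirGeom_lt (θ : ℝ) (h0 : 0 < θ) (h1 : θ < 1) (n : ℕ) (hn : 2 ≤ n) :
    1 - θ ^ n < n * (1 - θ) := by
  obtain ⟨m, rfl⟩ : ∃ m, n = m + 2 := ⟨n - 2, by omega⟩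
  have hm : θ ^ (m + 1) < 1 := pow_lt_one₀ h0.le h1 (by omega)
  have hle := sirGeom_le θ h0.le h1.le (m + 1)
  have h2 : θ * (1 - θ ^ (m + 1)) < 1 * (1 - θ ^ (m + 1)) :=
    mul_lt_mul_of_pos_right h1 (by linarith)
  have hps : θ ^ (m + 2) = θ * θ ^ (m + 1) := by ring
  push_cast at hle ⊢
  rw [hps]
  nlinarith

set_option maxHeartbeats 1000000 in
/-- if `R₀ ≤ 1` and (`p₁ > 0` or `ρ > 0` or `μ_R > 0`), and `h(1) = 0`,
then `h(θ) < 0` for all `θ ∈ (0,1)`. -/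
theorem sir_h_neg_subcritical (p : ℕ → ℝ) (αS μ β ρ μR : ℝ)
    (hp : ∀ k, 0 ≤ p k) (hpsum : ∑' k : ℕ, p k = 1)
    (h2 : Summable fun k : ℕ => (k : ℝ) ^ 2 * p k)
    (hαS : 0 < αS) (hαS1 : αS ≤ 1) (hμ : 0 < μ) (hβ : 0 < β) (hρ : 0 ≤ ρ) (hμR : 0 ≤ μR)
    (hR0 : β / (ρ + β) * (αS / μ) * (∑' k : ℕ, (k : ℝ) * ((k : ℝ) - 1) * p k) ≤ 1)
    (hD6 : 0 < p 1 ∨ 0 < ρ ∨ 0 < μR)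
    (h : ℝ → ℝ)
    (hdef : ∀ θ, h θ =
      μ * θ - αS * (∑' k : ℕ, (k : ℝ) * θ ^ (k - 1) * p k) - μR - ρ * μ * (1 - θ) / β)
    (h1 : h 1 = 0) :
    ∀ θ ∈ Set.Ioo (0:ℝ) 1, h θ < 0 := by
  intro θ hθ
  obtain ⟨hθ0, hθ1⟩ := hθ
  have hβ' : β ≠ 0 := ne_of_gt hβ
  have hρβ : 0 < ρ + β := by linarith
  have h1θ : 0 < 1 - θ := by linarith
  -- summability facts
  have hs1 : Summable fun k : ℕ => (k : ℝ) * p k := by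
    apply h2.of_nonneg_of_le (fun k => mul_nonneg (Nat.cast_nonneg k) (hp k))
    intro k
    have hk : (k : ℝ) ≤ (k : ℝ) ^ 2 := by
      rcases Nat.eq_zero_or_pos k with hk0 | hk0
      · simp [hk0]
      · have : (1:ℝ) ≤ (k:ℝ) := by exact_mod_cast hk0
        nlinarith
    exact mul_le_mul_of_nonneg_right hk (hp k)
  have hs2 : Summable fun k : ℕ => (k : ℝ) * ((k : ℝ) - 1) * p k := by
    apply h2.of_nonneg_of_le
    · intro k
      rcases Nat.eq_zero_or_pos k with hk | hk
      · simp [hk]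
      · have hk1 : (1 : ℝ) ≤ (k : ℝ) := by exact_mod_cast hk
        exact mul_nonneg (mul_nonneg (Nat.cast_nonneg k) (by linarith)) (hp k)
    · intro k
      nlinarith [mul_nonneg (Nat.cast_nonneg k : (0:ℝ) ≤ (k:ℝ)) (hp k), hp k,
        (Nat.cast_nonneg k : (0:ℝ) ≤ (k:ℝ))]
  have hsθ : Summable fun k : ℕ => (k : ℝ) * θ ^ (k - 1) * p k := by
    apply hs1.of_nonneg_of_le
    · intro k
      exact mul_nonneg (mul_nonneg (Nat.cast_nonneg k) (pow_nonneg hθ0.le _)) (hp k)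
    · intro k
      have hpow : θ ^ (k - 1) ≤ 1 := pow_le_one₀ hθ0.le hθ1.le
      nlinarith [mul_nonneg (Nat.cast_nonneg k : (0:ℝ) ≤ (k:ℝ)) (hp k)]
  set M1 := ∑' k : ℕ, (k : ℝ) * p k with hM1def
  set M2 := ∑' k : ℕ, (k : ℝ) * ((k : ℝ) - 1) * p k with hM2def
  set S := ∑' k : ℕ, (k : ℝ) * θ ^ (k - 1) * p k with hSdef
  -- from h(1) = 0
  have hμR' : μR = μ - αS * M1 := by
    rw [hdef] at h1
    simp only [one_pow, mul_one, sub_self, zero_div, mul_zero] at h1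
    linarith [h1]
  -- from R₀ ≤ 1
  have hkey0 : β * αS * M2 ≤ (ρ + β) * μ := by
    have h' := hR0
    rw [div_mul_div_comm, div_mul_eq_mul_div, div_le_one (by positivity)] at h'
    linarith [h']
  -- pointwise inequality
  have hfg : ∀ k : ℕ, (k : ℝ) * p k - (k : ℝ) * θ ^ (k - 1) * p k
      ≤ (1 - θ) * ((k : ℝ) * ((k : ℝ) - 1) * p k) := by
    intro k
    match k with
    | 0 => simp
    | 1 => simp
    | (m + 2) =>
      have hg := sirGeom_le θ hθ0.le hθ1.le (m + 1)
      have hpk := hp (m + 2)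
      have hsub : (m + 2 : ℕ) - 1 = m + 1 := rfl
      rw [hsub]
      push_cast at hg ⊢
      nlinarith [mul_le_mul_of_nonneg_right hg
        (mul_nonneg (by positivity : (0:ℝ) ≤ (m:ℝ) + 2) hpk)]
  have hsf : Summable fun k : ℕ => (k : ℝ) * p k - (k : ℝ) * θ ^ (k - 1) * p k :=
    hs1.sub hsθ
  have hsg : Summable fun k : ℕ => (1 - θ) * ((k : ℝ) * ((k : ℝ) - 1) * p k) :=
    hs2.mul_left _
  have htf : ∑' k : ℕ, ((k : ℝ) * p k - (k : ℝ) * θ ^ (k - 1) * p k) = M1 - S :=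
    Summable.tsum_sub hs1 hsθ
  have htg : ∑' k : ℕ, (1 - θ) * ((k : ℝ) * ((k : ℝ) - 1) * p k) = (1 - θ) * M2 :=
    tsum_mul_left
  -- main key inequality
  have hkey : αS * (M1 - S) < (1 - θ) * (μ * (ρ + β) / β) := by
    by_cases hA : ∃ k, 3 ≤ k ∧ 0 < p k
    · obtain ⟨k₀, hk3, hpk⟩ := hA
      have hlt : (k₀ : ℝ) * p k₀ - (k₀ : ℝ) * θ ^ (k₀ - 1) * p k₀
          < (1 - θ) * ((k₀ : ℝ) * ((k₀ : ℝ) - 1) * p k₀) := by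
        obtain ⟨m, rfl⟩ : ∃ m, k₀ = m + 3 := ⟨k₀ - 3, by omega⟩
        have hglt := sirGeom_lt θ hθ0 hθ1 (m + 2) (by omega)
        have hsub : (m + 3 : ℕ) - 1 = m + 2 := rfl
        rw [hsub]
        push_cast at hglt ⊢
        nlinarith [mul_lt_mul_of_pos_right hglt
          (mul_pos (by positivity : (0:ℝ) < (m:ℝ) + 3) hpk)]
      have htlt := Summable.tsum_lt_tsum hfg hlt hsf hsg
      rw [htf, htg] at htlt
      have h5 : αS * ((1 - θ) * M2) ≤ (1 - θ) * (μ * (ρ + β) / β) := by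
        rw [show (1 - θ) * (μ * (ρ + β) / β) = ((1 - θ) * (μ * (ρ + β))) / β by ring,
          le_div_iff₀ hβ]
        nlinarith [mul_le_mul_of_nonneg_left hkey0 h1θ.le]
      calc αS * (M1 - S) < αS * ((1 - θ) * M2) := by
            exact mul_lt_mul_of_pos_left htlt hαS
        _ ≤ (1 - θ) * (μ * (ρ + β) / β) := h5
    · push_neg at hA
      have hA' : ∀ k, 3 ≤ k → p k = 0 := fun k hk => le_antisymm (hA k hk) (hp k)
      have hM2 : M2 = 2 * p 2 := by
        rw [hM2def, tsum_eq_single 2 ?_]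
        · norm_num
        · intro k hk
          match k with
          | 0 => simp
          | 1 => simp
          | 2 => exact absurd rfl hk
          | (m + 3) => simp [hA' (m + 3) (by omega)]
      have hM1 : M1 = p 1 + 2 * p 2 := by
        rw [hM1def, tsum_eq_sum (s := ({1, 2} : Finset ℕ)) ?_]
        · norm_num
        · intro k hk
          simp only [Finset.mem_insert, Finset.mem_singleton] at hk
          push_neg at hk
          match k with
          | 0 => simp
          | 1 => exact absurd rfl hk.1
          | 2 => exact absurd rfl hk.2
          | (m + 3) => simp [hA' (m + 3) (by omega)]
      have hμeq : μ = αS * (p 1 + 2 * p 2) + μR := by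
        rw [← hM1]; linarith [hμR']
      have hstrict : αS * (2 * p 2) < μ * (ρ + β) / β := by
        rw [lt_div_iff₀ hβ]
        rcases hD6 with hc | hc | hc
        · nlinarith [mul_pos (mul_pos hαS hc) hβ, mul_nonneg hμR hβ.le,
            mul_nonneg hμ.le hρ, mul_nonneg (mul_nonneg hαS.le (hp 2)) hβ.le]
        · nlinarith [mul_pos hμ hc, mul_nonneg (mul_nonneg hαS.le (hp 1)) hβ.le,
            mul_nonneg hμR hβ.le, mul_nonneg (mul_nonneg hαS.le (hp 2)) hβ.le]
        · nlinarith [mul_pos hc hβ, mul_nonneg (mul_nonneg hαS.le (hp 1)) hβ.le,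
            mul_nonneg hμ.le hρ, mul_nonneg (mul_nonneg hαS.le (hp 2)) hβ.le]
      have htle := Summable.tsum_le_tsum hfg hsf hsg
      rw [htf, htg] at htle
      calc αS * (M1 - S) ≤ αS * ((1 - θ) * M2) :=
            mul_le_mul_of_nonneg_left htle hαS.le
        _ = (1 - θ) * (αS * (2 * p 2)) := by rw [hM2]; ring
        _ < (1 - θ) * (μ * (ρ + β) / β) := by
            exact mul_lt_mul_of_pos_left hstrict h1θ
  have heq : h θ = αS * (M1 - S) - (1 - θ) * (μ * (ρ + β) / β) := by
    rw [hdef, hμR']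
    field_simp
    ring
  rw [heq]
  linarith [hkey]
end

section
/- Let Y_ℓ be a random variable on {0,...,ℓ} with P(Y_ℓ = j) = (ρ/(ℓβ+ρ)) · (ℓ)_j / (ℓ + ρ/β - 1)_j, where (n)_j denotes the falling factorial, for ρ, β > 0 and ℓ ≥ 0. Then these probabilities are nonnegative and sum to 1, and E[Y_ℓ] = (β/(β+ρ))·ℓ. -/
open scoped BigOperators

/-- The falling factorial `(x)_j = x(x-1)⋯(x-j+1)` for a real `x`. -/
def fallFac (x : ℝ) (j : ℕ) : ℝ := ∏ i ∈ Finset.range j, (x - i)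

namespace SirYAux

noncomputable def aF (ℓ : ℕ) (r : ℝ) (j : ℕ) : ℝ :=
  fallFac (ℓ : ℝ) j / fallFac ((ℓ : ℝ) + r - 1) j

lemma den_pos (ℓ : ℕ) {r : ℝ} (hr : 0 < r) {j : ℕ} (hj : j ≤ ℓ) :
    0 < fallFac ((ℓ : ℝ) + r - 1) j := by
  apply Finset.prod_pos
  intro i hi
  have hi' : i < j := Finset.mem_range.mp hi
  have : (i : ℝ) ≤ (ℓ : ℝ) - 1 := by
    have : i + 1 ≤ ℓ := le_trans hi' hj
    have := (Nat.cast_le (α := ℝ)).mpr this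
    push_cast at this
    linarith
  linarith

lemma num_pos (ℓ : ℕ) {j : ℕ} (hj : j ≤ ℓ) : 0 < fallFac (ℓ : ℝ) j := by
  apply Finset.prod_pos
  intro i hi
  have hi' : i < j := Finset.mem_range.mp hi
  have : (i : ℝ) ≤ (ℓ : ℝ) - 1 := by
    have : i + 1 ≤ ℓ := le_trans hi' hj
    have := (Nat.cast_le (α := ℝ)).mpr this
    push_cast at this
    linarith
  linarith

lemma a_nonneg (ℓ : ℕ) {r : ℝ} (hr : 0 < r) {j : ℕ} (hj : j ≤ ℓ) :
    0 ≤ aF ℓ r j :=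
  le_of_lt (div_pos (num_pos ℓ hj) (den_pos ℓ hr hj))

lemma a_zero (ℓ : ℕ) (r : ℝ) : aF ℓ r 0 = 1 := by
  simp [aF, fallFac]

lemma a_top (ℓ : ℕ) (r : ℝ) : aF ℓ r (ℓ + 1) = 0 := by
  have h : fallFac (ℓ : ℝ) (ℓ + 1) = 0 :=
    Finset.prod_eq_zero (Finset.self_mem_range_succ ℓ) (by simp)
  simp [aF, h]

lemma a_rec (ℓ : ℕ) {r : ℝ} (hr : 0 < r) {j : ℕ} (hj : j ≤ ℓ) :
    aF ℓ r (j + 1) * ((ℓ : ℝ) + r - 1 - j) = aF ℓ r j * ((ℓ : ℝ) - j) := by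
  rcases eq_or_lt_of_le hj with h | h
  · subst h
    rw [a_top]
    simp
  · -- j < ℓ
    have hjc : (j : ℝ) ≤ (ℓ : ℝ) - 1 := by
      have : j + 1 ≤ ℓ := h
      have := (Nat.cast_le (α := ℝ)).mpr this
      push_cast at this
      linarith
    have hD : (0 : ℝ) < fallFac ((ℓ : ℝ) + r - 1) j := den_pos ℓ hr hj
    have hstep : (0 : ℝ) < (ℓ : ℝ) + r - 1 - j := by linarith
    have hnum : fallFac (ℓ : ℝ) (j + 1) = fallFac (ℓ : ℝ) j * ((ℓ : ℝ) - j) :=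
      Finset.prod_range_succ _ _
    have hden : fallFac ((ℓ : ℝ) + r - 1) (j + 1)
        = fallFac ((ℓ : ℝ) + r - 1) j * ((ℓ : ℝ) + r - 1 - j) := by
      have := Finset.prod_range_succ (fun i : ℕ => (ℓ : ℝ) + r - 1 - i) j
      simpa [fallFac] using this
    simp only [aF, hnum, hden]
    field_simp

lemma sumS (ℓ : ℕ) {r : ℝ} (hr : 0 < r) :
    ∑ j ∈ Finset.range (ℓ + 1), aF ℓ r j = ((ℓ : ℝ) + r) / r := by
  set S := ∑ j ∈ Finset.range (ℓ + 1), aF ℓ r j with hS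
  set T := ∑ j ∈ Finset.range (ℓ + 1), (j : ℝ) * aF ℓ r j with hT
  set g : ℕ → ℝ := fun k => aF ℓ r k * ((ℓ : ℝ) + r - k) with hg
  have e1 : ∑ j ∈ Finset.range (ℓ + 1), g (j + 1)
      = ∑ j ∈ Finset.range (ℓ + 1), aF ℓ r j * ((ℓ : ℝ) - j) := by
    apply Finset.sum_congr rfl
    intro j hj
    have hj' : j ≤ ℓ := Nat.lt_succ_iff.mp (Finset.mem_range.mp hj)
    have := a_rec ℓ hr hj'
    simp only [hg]
    push_cast
    linarith
  have hshift : ∑ j ∈ Finset.range (ℓ + 1), g (j + 1)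
      = (∑ j ∈ Finset.range (ℓ + 1), g j) + g (ℓ + 1) - g 0 := by
    have h1 := Finset.sum_range_succ' g (ℓ + 1)
    have h2 := Finset.sum_range_succ g (ℓ + 1)
    linarith [h1, h2]
  have hgtop : g (ℓ + 1) = 0 := by simp [hg, a_top]
  have hg0 : g 0 = (ℓ : ℝ) + r := by simp [hg, a_zero]
  have hsumg : ∑ j ∈ Finset.range (ℓ + 1), g j = ((ℓ : ℝ) + r) * S - T := by
    rw [hS, hT, Finset.mul_sum, ← Finset.sum_sub_distrib]
    apply Finset.sum_congr rfl
    intro j _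
    simp only [hg]
    ring
  have hrhs : ∑ j ∈ Finset.range (ℓ + 1), aF ℓ r j * ((ℓ : ℝ) - j)
      = (ℓ : ℝ) * S - T := by
    rw [hS, hT, Finset.mul_sum, ← Finset.sum_sub_distrib]
    apply Finset.sum_congr rfl
    intro j _
    ring
  rw [hshift, hgtop, hg0, hsumg, hrhs] at e1
  have : r * S = (ℓ : ℝ) + r := by linarith
  field_simp
  linarith

lemma sumT (ℓ : ℕ) {r : ℝ} (hr : 0 < r) :
    ∑ j ∈ Finset.range (ℓ + 1), (j : ℝ) * aF ℓ r j
      = (ℓ : ℝ) * ((ℓ : ℝ) + r) / (r * (r + 1)) := by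
  set S := ∑ j ∈ Finset.range (ℓ + 1), aF ℓ r j with hS
  set T := ∑ j ∈ Finset.range (ℓ + 1), (j : ℝ) * aF ℓ r j with hT
  set U := ∑ j ∈ Finset.range (ℓ + 1), (j : ℝ) ^ 2 * aF ℓ r j with hU
  set g : ℕ → ℝ := fun k => aF ℓ r k * ((ℓ : ℝ) + r - k) * k with hg
  have e1 : ∑ j ∈ Finset.range (ℓ + 1), g (j + 1)
      = ∑ j ∈ Finset.range (ℓ + 1), aF ℓ r j * ((ℓ : ℝ) - j) * ((j : ℝ) + 1) := by
    apply Finset.sum_congr rfl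
    intro j hj
    have hj' : j ≤ ℓ := Nat.lt_succ_iff.mp (Finset.mem_range.mp hj)
    have h := a_rec ℓ hr hj'
    simp only [hg]
    push_cast
    nlinarith [h]
  have hshift : ∑ j ∈ Finset.range (ℓ + 1), g (j + 1)
      = (∑ j ∈ Finset.range (ℓ + 1), g j) + g (ℓ + 1) - g 0 := by
    have h1 := Finset.sum_range_succ' g (ℓ + 1)
    have h2 := Finset.sum_range_succ g (ℓ + 1)
    linarith [h1, h2]
  have hgtop : g (ℓ + 1) = 0 := by simp [hg, a_top]
  have hg0 : g 0 = 0 := by simp [hg]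
  have hsumg : ∑ j ∈ Finset.range (ℓ + 1), g j = ((ℓ : ℝ) + r) * T - U := by
    rw [hT, hU, Finset.mul_sum, ← Finset.sum_sub_distrib]
    apply Finset.sum_congr rfl
    intro j _
    simp only [hg]
    ring
  have hrhs : ∑ j ∈ Finset.range (ℓ + 1), aF ℓ r j * ((ℓ : ℝ) - j) * ((j : ℝ) + 1)
      = (ℓ : ℝ) * S + ((ℓ : ℝ) - 1) * T - U := by
    rw [hS, hT, hU, Finset.mul_sum, Finset.mul_sum, ← Finset.sum_add_distrib,
      ← Finset.sum_sub_distrib]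
    apply Finset.sum_congr rfl
    intro j _
    ring
  rw [hshift, hgtop, hg0, hsumg, hrhs] at e1
  have hSv : S = ((ℓ : ℝ) + r) / r := sumS ℓ hr
  have h1 : (r + 1) * T = (ℓ : ℝ) * S := by linarith
  rw [hSv] at h1
  have hr' : r ≠ 0 := ne_of_gt hr
  have hr1 : r + 1 ≠ 0 := by positivity
  field_simp at h1 ⊢
  linarith

end SirYAux

/-- the numbers `P(Y_ℓ = j) = (ρ/(ℓβ+ρ)) (ℓ)_j/(ℓ+ρ/β-1)_j`, `0 ≤ j ≤ ℓ`,
are nonnegative, sum to `1`, and the corresponding mean is `(β/(β+ρ))ℓ`. -/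
theorem sir_Y_distribution (ℓ : ℕ) (β ρ : ℝ) (hβ : 0 < β) (hρ : 0 < ρ) :
    (∀ j ∈ Finset.range (ℓ + 1),
      0 ≤ ρ / ((ℓ : ℝ) * β + ρ) * fallFac (ℓ : ℝ) j / fallFac ((ℓ : ℝ) + ρ / β - 1) j) ∧
    (∑ j ∈ Finset.range (ℓ + 1),
      ρ / ((ℓ : ℝ) * β + ρ) * fallFac (ℓ : ℝ) j / fallFac ((ℓ : ℝ) + ρ / β - 1) j) = 1 ∧
    (∑ j ∈ Finset.range (ℓ + 1),
      (j : ℝ) * (ρ / ((ℓ : ℝ) * β + ρ) * fallFac (ℓ : ℝ) j / fallFac ((ℓ : ℝ) + ρ / β - 1) j))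
      = β / (β + ρ) * ℓ := by
  have hr : 0 < ρ / β := div_pos hρ hβ
  set r : ℝ := ρ / β with hrdef
  have hden : (0 : ℝ) < (ℓ : ℝ) * β + ρ := by positivity
  set c : ℝ := ρ / ((ℓ : ℝ) * β + ρ) with hc
  have hcpos : 0 < c := div_pos hρ hden
  have hcval : c = r / ((ℓ : ℝ) + r) := by
    have hpos : (0 : ℝ) < (ℓ : ℝ) + r := by positivity
    rw [hc, hrdef]
    rw [div_eq_div_iff (ne_of_gt hden) (by positivity)]
    field_simp
  have hterm : ∀ j : ℕ,
      c * fallFac (ℓ : ℝ) j / fallFac ((ℓ : ℝ) + r - 1) j = c * SirYAux.aF ℓ r j := by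
    intro j
    rw [SirYAux.aF, mul_div_assoc]
  constructor
  · intro j hj
    have hj' : j ≤ ℓ := Nat.lt_succ_iff.mp (Finset.mem_range.mp hj)
    rw [hterm j]
    exact mul_nonneg (le_of_lt hcpos) (SirYAux.a_nonneg ℓ hr hj')
  constructor
  · rw [Finset.sum_congr rfl fun j _ => hterm j, ← Finset.mul_sum,
      SirYAux.sumS ℓ hr, hcval]
    have h1 : (ℓ : ℝ) + r ≠ 0 := by positivity
    field_simp
  · have hterm2 : ∀ j ∈ Finset.range (ℓ + 1),
        (j : ℝ) * (c * fallFac (ℓ : ℝ) j / fallFac ((ℓ : ℝ) + r - 1) j)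
          = c * ((j : ℝ) * SirYAux.aF ℓ r j) := by
      intro j _
      rw [hterm j]
      ring
    rw [Finset.sum_congr rfl hterm2, ← Finset.mul_sum, SirYAux.sumT ℓ hr, hcval]
    have h1 : (0 : ℝ) < (ℓ : ℝ) + r := by positivity
    have h2 : (0 : ℝ) < r + 1 := by positivity
    rw [hrdef] at h1 h2 ⊢
    field_simp
    ring
end

section
/- Let p_I : [θ_∞, 1] → [0,∞) be Lipschitz continuous with p_I(e^{-τ̂*}) = 0 where τ̂* = -ln θ_∞, and p_I(e^{-σ}) > 0 for σ ∈ [0, τ̂*). Define A(τ) = ∫_0^τ dσ/(β p_I(e^{-σ})) for τ ∈ [0, τ̂*). Then A is strictly increasing and A(τ) → ∞ as τ ↑ τ̂*. -/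
open scoped BigOperators

/-- `A(τ) = ∫₀^τ dσ/(β p_I(e^{-σ}))` is strictly increasing on
`[0, τ̂*)` where `τ̂* = -log θ_∞`, and `A(τ) → ∞` as `τ ↑ τ̂*`. -/
theorem sir_time_change_diverges (pI : ℝ → ℝ) (β θinf : ℝ) (hβ : 0 < β)
    (hθinf : θinf ∈ Set.Ioo (0:ℝ) 1)
    (K : NNReal) (hLip : LipschitzOnWith K pI (Set.Icc θinf 1))
    (hzero : pI θinf = 0)
    (hpos : ∀ σ ∈ Set.Ico (0:ℝ) (-Real.log θinf), 0 < pI (Real.exp (-σ))) :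
    StrictMonoOn (fun τ => ∫ σ in (0:ℝ)..τ, 1 / (β * pI (Real.exp (-σ))))
        (Set.Ico 0 (-Real.log θinf)) ∧
    Filter.Tendsto (fun τ => ∫ σ in (0:ℝ)..τ, 1 / (β * pI (Real.exp (-σ))))
        (nhdsWithin (-Real.log θinf) (Set.Iio (-Real.log θinf))) Filter.atTop := by
  set T : ℝ := -Real.log θinf with hTdef
  have hT : 0 < T := by
    have := Real.log_neg hθinf.1 hθinf.2
    linarith
  have hθT : θinf = Real.exp (-T) := by
    rw [hTdef, neg_neg, Real.exp_log hθinf.1]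
  set f : ℝ → ℝ := fun σ => 1 / (β * pI (Real.exp (-σ))) with hfdef
  have hmem : ∀ σ : ℝ, 0 ≤ σ → σ < T → Real.exp (-σ) ∈ Set.Icc θinf 1 := by
    intro σ h0 hσT
    constructor
    · rw [hθT]
      exact (Real.exp_le_exp.mpr (by linarith))
    · simpa using Real.exp_le_exp.mpr (by linarith : -σ ≤ 0)
  have hfpos : ∀ σ : ℝ, 0 ≤ σ → σ < T → 0 < f σ := by
    intro σ h0 hσT
    exact one_div_pos.mpr (mul_pos hβ (hpos σ ⟨h0, hσT⟩))
  have hInt : ∀ a b : ℝ, 0 ≤ a → a ≤ b → b < T → IntervalIntegrable f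
      MeasureTheory.volume a b := by
    intro a b ha hab hbT
    apply ContinuousOn.intervalIntegrable_of_Icc hab
    have hcomp : ContinuousOn (fun σ : ℝ => pI (Real.exp (-σ))) (Set.Icc a b) :=
      hLip.continuousOn.comp ((Real.continuous_exp.comp continuous_neg).continuousOn)
        (fun σ hσ => hmem σ (ha.trans hσ.1) (lt_of_le_of_lt hσ.2 hbT))
    exact continuousOn_const.div (continuousOn_const.mul hcomp)
      (fun σ hσ => ne_of_gt (mul_pos hβ (hpos σ ⟨ha.trans hσ.1, lt_of_le_of_lt hσ.2 hbT⟩)))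
  constructor
  · -- strict monotonicity
    intro x hx y hy hxy
    have h1 : IntervalIntegrable f MeasureTheory.volume 0 x := hInt 0 x le_rfl hx.1 hx.2
    have h2 : IntervalIntegrable f MeasureTheory.volume x y := hInt x y hx.1 hxy.le hy.2
    have hsum := intervalIntegral.integral_add_adjacent_intervals h1 h2
    have hmid : 0 < ∫ σ in x..y, f σ :=
      intervalIntegral.intervalIntegral_pos_of_pos_on h2
        (fun σ hσ => hfpos σ (hx.1.trans hσ.1.le) (hσ.2.trans hy.2)) hxy
    simp only [hfdef] at hsum hmid ⊢
    linarith
  · -- divergence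
    have hθm : θinf ∈ Set.Icc θinf 1 := ⟨le_rfl, hθinf.2.le⟩
    have hK : (0:ℝ) < K := by
      have hp1 : 0 < pI (Real.exp (-(0:ℝ))) := hpos 0 ⟨le_rfl, hT⟩
      have h1m : Real.exp (-(0:ℝ)) ∈ Set.Icc θinf 1 := hmem 0 le_rfl hT
      have := hLip.dist_le_mul _ h1m _ hθm
      rw [hzero, Real.dist_eq, Real.dist_eq, sub_zero] at this
      by_contra h
      have hK0 : (K:ℝ) = 0 := le_antisymm (not_lt.mp h) K.coe_nonneg
      rw [hK0, zero_mul, abs_le] at this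
      linarith [this.2, le_abs_self (pI (Real.exp (-(0:ℝ))))]
    set c : ℝ := 1 / (β * K) with hcdef
    have hc : 0 < c := one_div_pos.mpr (mul_pos hβ hK)
    -- pointwise bound
    have hptwise : ∀ σ : ℝ, 0 ≤ σ → σ < T → c * (T - σ)⁻¹ ≤ f σ := by
      intro σ h0 hσT
      have hx := hmem σ h0 hσT
      have hlip := hLip.dist_le_mul _ hx _ hθm
      rw [hzero, Real.dist_eq, Real.dist_eq, sub_zero] at hlip
      have hub1 : pI (Real.exp (-σ)) ≤ K * (Real.exp (-σ) - θinf) := by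
        have h1 := (abs_le.mp hlip).2
        rw [abs_of_nonneg (by linarith [hx.1] : 0 ≤ Real.exp (-σ) - θinf)] at h1
        exact h1
      have hexp : Real.exp (-σ) - θinf ≤ T - σ := by
        have he : Real.exp (-T) = Real.exp (-σ) * Real.exp (-(T - σ)) := by
          rw [← Real.exp_add]; ring_nf
        have h1 : -(T - σ) + 1 ≤ Real.exp (-(T - σ)) := Real.add_one_le_exp _
        have h2 : Real.exp (-σ) ≤ 1 := Real.exp_le_one_iff.mpr (by linarith)
        have h3 : 0 < Real.exp (-σ) := Real.exp_pos _
        rw [hθT, he]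
        nlinarith [mul_le_mul_of_nonneg_left h1 h3.le]
      have hub : pI (Real.exp (-σ)) ≤ K * (T - σ) :=
        hub1.trans (mul_le_mul_of_nonneg_left hexp K.coe_nonneg)
      have hpσ : 0 < pI (Real.exp (-σ)) := hpos σ ⟨h0, hσT⟩
      have hTσ : 0 < T - σ := by linarith
      have hle : β * pI (Real.exp (-σ)) ≤ β * K * (T - σ) := by
        rw [mul_assoc]; exact mul_le_mul_of_nonneg_left hub hβ.le
      have := one_div_le_one_div_of_le (mul_pos hβ hpσ) hle
      calc c * (T - σ)⁻¹ = 1 / (β * ↑K * (T - σ)) := by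
            rw [hcdef]; field_simp
        _ ≤ f σ := this
    -- target tendsto
    have hsub : Filter.Tendsto (fun τ : ℝ => T - τ) (nhdsWithin T (Set.Iio T))
        (nhdsWithin 0 (Set.Ioi (0:ℝ))) := by
      apply tendsto_nhdsWithin_iff.mpr
      constructor
      · have h : Filter.Tendsto (fun τ : ℝ => T - τ) (nhds T) (nhds (T - T)) :=
          tendsto_const_nhds.sub Filter.tendsto_id
        rw [sub_self] at h
        exact h.mono_left nhdsWithin_le_nhds
      · filter_upwards [self_mem_nhdsWithin] with τ hτ
        exact sub_pos.mpr (Set.mem_Iio.mp hτ)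
    have hlog : Filter.Tendsto (fun τ : ℝ => Real.log (T - τ))
        (nhdsWithin T (Set.Iio T)) Filter.atBot :=
      Real.tendsto_log_nhdsGT_zero.comp hsub
    have hneg : Filter.Tendsto (fun τ : ℝ => -Real.log (T - τ))
        (nhdsWithin T (Set.Iio T)) Filter.atTop := Filter.tendsto_neg_atBot_atTop.comp hlog
    have htarget : Filter.Tendsto (fun τ : ℝ => c * (Real.log T - Real.log (T - τ)))
        (nhdsWithin T (Set.Iio T)) Filter.atTop := by
      have h1 : Filter.Tendsto (fun τ : ℝ => Real.log T - Real.log (T - τ))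
          (nhdsWithin T (Set.Iio T)) Filter.atTop := by
        simpa [sub_eq_add_neg] using
          Filter.tendsto_atTop_add_const_left _ (Real.log T) hneg
      exact h1.const_mul_atTop hc
    refine Filter.tendsto_atTop_mono' _ ?_ htarget
    filter_upwards [Ioo_mem_nhdsLT_of_mem (⟨hT, le_rfl⟩ : T ∈ Set.Ioc 0 T)] with τ hτ
    have hτ0 : (0:ℝ) ≤ τ := hτ.1.le
    have hτT : τ < T := hτ.2
    -- integrability of lower bound function
    have hg_int : IntervalIntegrable (fun σ : ℝ => c * (T - σ)⁻¹)
        MeasureTheory.volume 0 τ := by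
      apply ContinuousOn.intervalIntegrable_of_Icc hτ0
      exact continuousOn_const.mul ((continuousOn_const.sub continuousOn_id).inv₀
        (fun σ hσ => ne_of_gt (by linarith [hσ.2] : (0:ℝ) < T - σ)))
    have hcmp : (∫ σ in (0:ℝ)..τ, c * (T - σ)⁻¹) ≤ ∫ σ in (0:ℝ)..τ, f σ := by
      apply intervalIntegral.integral_mono_on hτ0 hg_int (hInt 0 τ le_rfl hτ0 hτT)
      intro σ hσ
      exact hptwise σ hσ.1 (lt_of_le_of_lt hσ.2 hτT)
    have hcalc : (∫ σ in (0:ℝ)..τ, c * (T - σ)⁻¹)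
        = c * (Real.log T - Real.log (T - τ)) := by
      rw [intervalIntegral.integral_const_mul]
      congr 1
      have h1 : (∫ σ in (0:ℝ)..τ, (T - σ)⁻¹) = ∫ u in (T - τ)..(T - 0), u⁻¹ :=
        intervalIntegral.integral_comp_sub_left (fun u => u⁻¹) T
      have h2 : (∫ u in (T - τ)..T, u⁻¹) = Real.log (T / (T - τ)) :=
        integral_inv_of_pos (by linarith) hT
      rw [h1, sub_zero, h2,
        Real.log_div (ne_of_gt hT) (by intro h; rw [sub_eq_zero] at h; linarith)]
    calc c * (Real.log T - Real.log (T - τ)) = ∫ σ in (0:ℝ)..τ, c * (T - σ)⁻¹ := hcalc.symm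
      _ ≤ ∫ σ in (0:ℝ)..τ, f σ := hcmp
end

section
/- Let h_S(θ) = α_S ∑_{k≥0} k θ^k p_k where p_k ~ c k^{-3} as k → ∞ (i.e. α = 2), α_S, c > 0. Then h_S(1) - h_S(1-x) ≍ x|log x| as x ↓ 0, and consequently ∫_0^{x_0} dx/(h_S(1)-h_S(1-x)) = ∞ for any small x_0 > 0. -/
open scoped BigOperators
open MeasureTheory Set

lemma aux_upper (x : ℝ) (hx1 : x ≤ 1) (k : ℕ) :
    1 - (1 - x) ^ k ≤ (k : ℝ) * x := by
  have h := one_add_mul_le_pow (a := -x) (by linarith) k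
  have : 1 + (k:ℝ) * (-x) ≤ (1 - x) ^ k := by simpa [sub_eq_add_neg] using h
  linarith

lemma aux_lower (x : ℝ) (hx : 0 < x) (hx1 : x < 1) (k : ℕ) (hkx : (k:ℝ) * x ≤ 1) :
    (k : ℝ) * x / 2 ≤ 1 - (1 - x) ^ k := by
  have h1x : (0:ℝ) < 1 + x := by linarith
  have hstep : (1 - x) ≤ (1 + x)⁻¹ := by
    rw [show (1+x)⁻¹ = 1/(1+x) by ring, le_div_iff₀ h1x]
    nlinarith
  have hb : (1:ℝ) + (k:ℝ) * x ≤ (1 + x) ^ k := by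
    simpa using one_add_mul_le_pow (a := x) (by linarith) k
  have hpos : (0:ℝ) < 1 + (k:ℝ) * x := by positivity
  have h2 : (1 - x) ^ k ≤ (1 + (k:ℝ) * x)⁻¹ := by
    calc (1 - x) ^ k ≤ ((1 + x)⁻¹) ^ k := by
          apply pow_le_pow_left₀ (by linarith) hstep
      _ = ((1 + x) ^ k)⁻¹ := by rw [inv_pow]
      _ ≤ (1 + (k:ℝ) * x)⁻¹ := by
          apply inv_anti₀ hpos hb
  have h3 : (1 + (k:ℝ) * x)⁻¹ ≤ 1 - (k:ℝ) * x / 2 := by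
    rw [show (1+(k:ℝ)*x)⁻¹ = 1/(1+(k:ℝ)*x) by ring, div_le_iff₀ hpos]
    have hk0 : (0:ℝ) ≤ (k:ℝ) * x := by positivity
    nlinarith
  linarith

lemma aux_hasDeriv (x : ℝ) (hx : 0 < x) (hx1 : x < 1) :
    HasDerivAt (fun t => -Real.log (-Real.log t)) ((x * (-Real.log x))⁻¹) x := by
  have hlx : Real.log x < 0 := Real.log_neg hx hx1
  have h1 : HasDerivAt (fun t => -Real.log t) (-x⁻¹) x := (Real.hasDerivAt_log hx.ne').neg
  have h2 : HasDerivAt Real.log (-Real.log x)⁻¹ (-Real.log x) :=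
    Real.hasDerivAt_log (by linarith)
  have h3 := (h2.comp x h1).neg
  have e : (x * -Real.log x)⁻¹ = -((-Real.log x)⁻¹ * -x⁻¹) := by ring
  rw [e]
  exact h3

lemma aux_nonint (b : ℝ) (hb : 0 < b) (hb1 : b < 1) :
    ¬ MeasureTheory.IntegrableOn (fun x => (x * |Real.log x|)⁻¹) (Set.Ioo 0 b) := by
  intro hint
  set ψ : ℝ → ℝ := fun x => (x * |Real.log x|)⁻¹ with hψdef
  set C : ℝ := ∫ x in Set.Ioo 0 b, ψ x with hC
  set m : ℝ := b / 2 with hm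
  have hm0 : 0 < m := by positivity
  have hm1 : m < 1 := by linarith
  have hmb : m < b := by linarith
  have key : ∀ ε : ℝ, 0 < ε → ε ≤ m →
      Real.log (-Real.log ε) - Real.log (-Real.log m) ≤ C := by
    intro ε hε hεm
    have hsub : Set.Ioc ε m ⊆ Set.Ioo 0 b := fun t ht => ⟨hε.trans ht.1, lt_of_le_of_lt ht.2 hmb⟩
    have hii : IntervalIntegrable ψ volume ε m :=
      (intervalIntegrable_iff_integrableOn_Ioc_of_le hεm).2 (hint.mono_set hsub)
    have hftc : ∀ x ∈ Set.uIcc ε m, HasDerivAt (fun t => -Real.log (-Real.log t)) (ψ x) x := by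
      intro x hx
      rw [Set.uIcc_of_le hεm] at hx
      have hx0 : 0 < x := lt_of_lt_of_le hε hx.1
      have hx1 : x < 1 := lt_of_le_of_lt hx.2 hm1
      have : ψ x = (x * (-Real.log x))⁻¹ := by
        rw [hψdef]; simp only
        rw [abs_of_neg (Real.log_neg hx0 hx1)]
      rw [this]
      exact aux_hasDeriv x hx0 hx1
    have heq := intervalIntegral.integral_eq_sub_of_hasDerivAt hftc hii
    have hIoc : ∫ x in ε..m, ψ x = ∫ x in Set.Ioc ε m, ψ x :=
      intervalIntegral.integral_of_le hεm
    have hmono : ∫ x in Set.Ioc ε m, ψ x ≤ C := by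
      apply MeasureTheory.setIntegral_mono_set hint
      · filter_upwards [ae_restrict_mem measurableSet_Ioo] with t ht
        have : (0:ℝ) < t := ht.1
        positivity
      · exact HasSubset.Subset.eventuallyLE hsub
    rw [hIoc] at heq
    rw [heq] at hmono
    linarith [hmono]
  set M : ℝ := C + Real.log (-Real.log m) with hM
  set ε : ℝ := min m (Real.exp (-(Real.exp (M + 1)))) with hε
  have hε0 : 0 < ε := lt_min hm0 (Real.exp_pos _)
  have hεm : ε ≤ m := min_le_left _ _
  have h1 : Real.log ε ≤ -(Real.exp (M + 1)) := by
    calc Real.log ε ≤ Real.log (Real.exp (-(Real.exp (M + 1)))) :=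
          Real.log_le_log hε0 (min_le_right _ _)
      _ = -(Real.exp (M + 1)) := Real.log_exp _
  have h2 : Real.exp (M + 1) ≤ -Real.log ε := by linarith
  have h3 : M + 1 ≤ Real.log (-Real.log ε) := by
    calc M + 1 = Real.log (Real.exp (M + 1)) := (Real.log_exp _).symm
      _ ≤ Real.log (-Real.log ε) := Real.log_le_log (Real.exp_pos _) h2
  have := key ε hε0 hεm
  linarith

set_option maxHeartbeats 1000000 in
/-- if `p_k ~ c k^{-3}` then `h_S(1) - h_S(1-x) ≍ x|log x|` as `x ↓ 0`,
and `∫₀^{y} dx/(h_S(1)-h_S(1-x)) = ∞` for every small `y > 0`. -/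
theorem sir_hS_asymptotics_infinite (p : ℕ → ℝ) (αS c : ℝ)
    (hαS : 0 < αS) (hc : 0 < c)
    (hp : ∀ k, 0 ≤ p k) (hpsum : ∑' k : ℕ, p k = 1)
    (htail : Filter.Tendsto (fun k : ℕ => p k * (k : ℝ) ^ 3)
      Filter.atTop (nhds c))
    (hS : ℝ → ℝ)
    (hSdef : ∀ θ, hS θ = αS * ∑' k : ℕ, (k : ℝ) * θ ^ k * p k) :
    ∃ c₁ c₂ x₀ : ℝ, 0 < c₁ ∧ c₁ ≤ c₂ ∧ 0 < x₀ ∧ x₀ < 1 ∧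
      (∀ x ∈ Set.Ioo (0:ℝ) x₀,
        c₁ * (x * |Real.log x|) ≤ hS 1 - hS (1 - x) ∧
          hS 1 - hS (1 - x) ≤ c₂ * (x * |Real.log x|)) ∧
      ∀ y ∈ Set.Ioo (0:ℝ) x₀,
        ¬ MeasureTheory.IntegrableOn (fun x => (hS 1 - hS (1 - x))⁻¹) (Set.Ioo 0 y) := by
  -- Step 0 : get N
  obtain ⟨N₀, hN₀⟩ := Metric.tendsto_atTop.mp htail (c/2) (by positivity)
  set N : ℕ := max N₀ 2 with hNdef
  have hN2 : 2 ≤ N := le_max_right _ _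
  have hNband : ∀ k : ℕ, N ≤ k → c/2 ≤ p k * (k:ℝ)^3 ∧ p k * (k:ℝ)^3 ≤ 2*c := by
    intro k hk
    have h := hN₀ k (le_trans (le_max_left _ _) hk)
    rw [Real.dist_eq, abs_sub_lt_iff] at h
    constructor <;> linarith [h.1, h.2]
  have hkpos : ∀ k : ℕ, N ≤ k → (0:ℝ) < (k:ℝ) := by
    intro k hk
    have : 0 < k := by omega
    exact_mod_cast this
  have hq_hi : ∀ k : ℕ, N ≤ k → (k:ℝ) * p k ≤ 2*c * (((k:ℝ))^2)⁻¹ := by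
    intro k hk
    have hk0 := hkpos k hk
    have h := (hNband k hk).2
    rw [show 2*c*(((k:ℝ))^2)⁻¹ = 2*c/(k:ℝ)^2 by ring, le_div_iff₀ (by positivity)]
    nlinarith
  have ha_hi : ∀ k : ℕ, N ≤ k → (k:ℝ)^2 * p k ≤ 2*c * ((k:ℝ))⁻¹ := by
    intro k hk
    have hk0 := hkpos k hk
    have h := (hNband k hk).2
    rw [show 2*c*((k:ℝ))⁻¹ = 2*c/(k:ℝ) by ring, le_div_iff₀ hk0]
    nlinarith
  have ha_lo : ∀ k : ℕ, N ≤ k → c/2 * ((k:ℝ))⁻¹ ≤ (k:ℝ)^2 * p k := by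
    intro k hk
    have hk0 := hkpos k hk
    have h := (hNband k hk).1
    rw [show c/2*((k:ℝ))⁻¹ = c/2/(k:ℝ) by ring, div_le_iff₀ hk0]
    nlinarith
  -- summability
  have hsq : Summable (fun k : ℕ => (((k:ℝ))^2)⁻¹) := by
    have := (Real.summable_nat_pow_inv (p := 2)).mpr (by norm_num)
    simpa using this
  have hf : Summable (fun k : ℕ => (k:ℝ) * p k) := by
    rw [← summable_nat_add_iff N]
    apply Summable.of_nonneg_of_le (f := fun k : ℕ => 2*c*((((k+N:ℕ)):ℝ)^2)⁻¹)
      (fun k => mul_nonneg (Nat.cast_nonneg _) (hp _))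
    · intro k
      exact hq_hi (k+N) (Nat.le_add_left N k)
    · exact ((summable_nat_add_iff N).mpr hsq).mul_left (2*c)
  have hP : Summable p := by
    by_contra h
    rw [tsum_eq_zero_of_not_summable h] at hpsum
    norm_num at hpsum
  -- difference formula and summability of the difference series
  have hTsum : ∀ x : ℝ, 0 ≤ x → x ≤ 1 →
      Summable (fun k : ℕ => (k:ℝ) * p k * (1 - (1-x)^k)) := by
    intro x hx hx1
    apply Summable.of_nonneg_of_le (f := fun k : ℕ => (k:ℝ) * p k) ?_ ?_ hf
    · intro k
      have h1 : (1-x)^k ≤ 1 := pow_le_one₀ (by linarith) (by linarith)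
      exact mul_nonneg (mul_nonneg (Nat.cast_nonneg k) (hp k)) (by linarith)
    · intro k
      have h0 : (0:ℝ) ≤ (1-x)^k := pow_nonneg (by linarith) k
      have hkp : (0:ℝ) ≤ (k:ℝ) * p k := mul_nonneg (Nat.cast_nonneg k) (hp k)
      show (k:ℝ) * p k * (1 - (1-x)^k) ≤ (k:ℝ) * p k
      nlinarith [mul_nonneg hkp h0]
  have hdiff : ∀ x : ℝ, 0 < x → x < 1 →
      hS 1 - hS (1-x) = αS * ∑' k : ℕ, (k:ℝ) * p k * (1 - (1-x)^k) := by
    intro x hx hx1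
    rw [hSdef, hSdef, ← mul_sub]
    congr 1
    have hg : Summable (fun k : ℕ => (k:ℝ) * (1-x)^k * p k) := by
      apply Summable.of_nonneg_of_le (f := fun k : ℕ => (k:ℝ) * p k) ?_ ?_ hf
      · intro k
        have h0 : (0:ℝ) ≤ (1-x)^k := pow_nonneg (by linarith) k
        exact mul_nonneg (mul_nonneg (Nat.cast_nonneg k) h0) (hp k)
      · intro k
        have h1 : (1-x)^k ≤ 1 := pow_le_one₀ (by linarith) (by linarith)
        have h0 : (0:ℝ) ≤ (1-x)^k := pow_nonneg (by linarith) k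
        have hkp : (0:ℝ) ≤ (k:ℝ) * p k := mul_nonneg (Nat.cast_nonneg k) (hp k)
        show (k:ℝ) * (1-x)^k * p k ≤ (k:ℝ) * p k
        nlinarith [mul_nonneg (mul_nonneg (Nat.cast_nonneg (α := ℝ) k) (hp k)) (sub_nonneg.mpr h1)]
    have hone : (fun k : ℕ => (k:ℝ) * (1:ℝ)^k * p k) = fun k : ℕ => (k:ℝ) * p k := by
      funext k; simp
    rw [hone, ← hf.tsum_sub hg]
    apply tsum_congr
    intro k
    ring
  -- constants
  set CN : ℝ := 1 + Real.log N with hCN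
  have hCN1 : 1 ≤ CN := by
    have : (1:ℝ) ≤ (N:ℝ) := by exact_mod_cast (by omega : 1 ≤ N)
    have := Real.log_nonneg this
    simp only [hCN]; linarith
  set x₀ : ℝ := min (Real.exp (-(2*CN+1))) (((N:ℝ)+1))⁻¹ with hx₀
  have hx₀pos : 0 < x₀ := lt_min (Real.exp_pos _) (by positivity)
  have hx₀lt1 : x₀ < 1 := by
    apply lt_of_le_of_lt (min_le_left _ _)
    apply Real.exp_lt_one_iff.mpr
    linarith
  
  set c₁ : ℝ := αS * (c/8) with hc₁
  set c₂ : ℝ := αS * ((N:ℝ)^2 + 8*c) with hc₂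
  have hc₁pos : 0 < c₁ := by rw [hc₁]; positivity
  have hc₂pos : 0 < c₂ := by rw [hc₂]; positivity
  have hc₁₂ : c₁ ≤ c₂ := by
    rw [hc₁, hc₂]
    apply mul_le_mul_of_nonneg_left ?_ hαS.le
    nlinarith [sq_nonneg (N:ℝ)]
  have hharm : ∀ m : ℕ, (harmonic m : ℝ) = ∑ k ∈ Finset.Ioc 0 m, ((k:ℝ))⁻¹ := by
    intro m
    rw [harmonic_eq_sum_Icc]
    push_cast
    apply Finset.sum_congr ?_ (fun _ _ => rfl)
    ext k
    simp only [Finset.mem_Icc, Finset.mem_Ioc]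
    omega
  -- main two-sided estimate
  have hmain : ∀ x ∈ Set.Ioo (0:ℝ) x₀,
      c₁ * (x * |Real.log x|) ≤ hS 1 - hS (1-x) ∧
        hS 1 - hS (1-x) ≤ c₂ * (x * |Real.log x|) := by
    intro x hxm
    obtain ⟨hx, hxx₀⟩ := hxm
    have hx1 : x < 1 := lt_trans hxx₀ hx₀lt1
    have hlogneg : Real.log x < 0 := Real.log_neg hx hx1
    have habs : |Real.log x| = -Real.log x := abs_of_neg hlogneg
    have hlogbig : 2*CN + 1 ≤ -Real.log x := by
      have h1 : x < Real.exp (-(2*CN+1)) := lt_of_lt_of_le hxx₀ (min_le_left _ _)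
      have h2 := Real.log_lt_log hx h1
      rw [Real.log_exp] at h2
      linarith
    have hxN : ((N:ℝ)+1) < x⁻¹ := by
      have h1 : x < ((N:ℝ)+1)⁻¹ := lt_of_lt_of_le hxx₀ (min_le_right _ _)
      have h2 := inv_strictAnti₀ hx h1
      rwa [inv_inv] at h2
    set n : ℕ := ⌊x⁻¹⌋₊ with hn
    have hxinv0 : (0:ℝ) < x⁻¹ := by positivity
    have hn1 : (n:ℝ) ≤ x⁻¹ := Nat.floor_le hxinv0.le
    have hn2 : x⁻¹ < (n:ℝ) + 1 := Nat.lt_floor_add_one _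
    have hNn : N ≤ n := Nat.le_floor (by push_cast; linarith)
    have hT := hTsum x hx.le hx1.le
    have hnn : ∀ i : ℕ, 0 ≤ (i:ℝ) * p i * (1 - (1-x)^i) := by
      intro i
      have h1 : (1-x)^i ≤ 1 := pow_le_one₀ (by linarith) (by linarith)
      exact mul_nonneg (mul_nonneg (Nat.cast_nonneg i) (hp i)) (by linarith)
    rw [hdiff x hx hx1]
    constructor
    · -- LOWER BOUND
      have hsumlb : ∀ k ∈ Finset.Ioc (N-1) n,
          c/4 * x * ((k:ℝ))⁻¹ ≤ (k:ℝ) * p k * (1 - (1-x)^k) := by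
        intro k hk
        rw [Finset.mem_Ioc] at hk
        have hkN : N ≤ k := by omega
        have hkx1 : (k:ℝ) * x ≤ 1 := by
          have ha : (k:ℝ) ≤ (n:ℝ) := by exact_mod_cast hk.2
          have hb : (k:ℝ) * x ≤ x⁻¹ * x :=
            mul_le_mul_of_nonneg_right (ha.trans hn1) hx.le
          rwa [inv_mul_cancel₀ hx.ne'] at hb
        have h1 := aux_lower x hx hx1 k hkx1
        have h2 := ha_lo k hkN
        have hkp : (0:ℝ) ≤ (k:ℝ) * p k := mul_nonneg (Nat.cast_nonneg k) (hp k)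
        calc c/4 * x * ((k:ℝ))⁻¹ = (x/2) * (c/2 * ((k:ℝ))⁻¹) := by ring
          _ ≤ (x/2) * ((k:ℝ)^2 * p k) := mul_le_mul_of_nonneg_left h2 (by positivity)
          _ = ((k:ℝ) * p k) * ((k:ℝ) * x / 2) := by ring
          _ ≤ ((k:ℝ) * p k) * (1 - (1-x)^k) := mul_le_mul_of_nonneg_left h1 hkp
      have hsum1 : ∑ k ∈ Finset.Ioc (N-1) n, c/4 * x * ((k:ℝ))⁻¹
          ≤ ∑ k ∈ Finset.Ioc (N-1) n, (k:ℝ) * p k * (1 - (1-x)^k) :=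
        Finset.sum_le_sum hsumlb
      have hsum2 : ∑ k ∈ Finset.Ioc (N-1) n, (k:ℝ) * p k * (1 - (1-x)^k)
          ≤ ∑' k : ℕ, (k:ℝ) * p k * (1 - (1-x)^k) :=
        Summable.sum_le_tsum _ (fun i _ => hnn i) hT
      have hsplit : (∑ k ∈ Finset.Ioc 0 (N-1), ((k:ℝ))⁻¹)
            + ∑ k ∈ Finset.Ioc (N-1) n, ((k:ℝ))⁻¹
          = ∑ k ∈ Finset.Ioc 0 n, ((k:ℝ))⁻¹ :=
        Finset.sum_Ioc_consecutive _ (Nat.zero_le _) (by omega)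
      have hhlow := log_add_one_le_harmonic n
      push_cast at hhlow
      have hhupp : (harmonic (N-1) : ℝ) ≤ 1 + Real.log (N:ℝ) := by
        have h1 := harmonic_le_one_add_log (N-1)
        have h2 : Real.log (((N-1:ℕ)):ℝ) ≤ Real.log (N:ℝ) := by
          apply Real.log_le_log
          · have h3 : (1:ℕ) ≤ N-1 := by omega
            have h4 : (1:ℝ) ≤ ((N-1:ℕ):ℝ) := by exact_mod_cast h3
            linarith
          · exact_mod_cast Nat.sub_le N 1
        linarith
      have hlogn1 : -Real.log x ≤ Real.log ((n:ℝ)+1) := by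
        rw [← Real.log_inv]
        exact Real.log_le_log hxinv0 hn2.le
      have hharmIneq : -Real.log x - CN ≤ ∑ k ∈ Finset.Ioc (N-1) n, ((k:ℝ))⁻¹ := by
        have e1 := hharm n
        have e2 := hharm (N-1)
        linarith [hsplit, hhlow, hhupp, hlogn1]
      have hIoc_sum : (c/4*x) * ((-Real.log x) - CN)
          ≤ ∑ k ∈ Finset.Ioc (N-1) n, c/4 * x * ((k:ℝ))⁻¹ := by
        rw [← Finset.mul_sum]
        exact mul_le_mul_of_nonneg_left hharmIneq (by positivity)
      have hTlow : c/8 * (x * -Real.log x) ≤ ∑' k : ℕ, (k:ℝ) * p k * (1 - (1-x)^k) := by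
        calc c/8 * (x * -Real.log x) ≤ (c/4*x) * ((-Real.log x) - CN) := by
              nlinarith [mul_nonneg (mul_nonneg hc.le hx.le)
                (show (0:ℝ) ≤ -Real.log x - 2*CN by linarith)]
          _ ≤ ∑ k ∈ Finset.Ioc (N-1) n, c/4 * x * ((k:ℝ))⁻¹ := hIoc_sum
          _ ≤ ∑ k ∈ Finset.Ioc (N-1) n, (k:ℝ) * p k * (1 - (1-x)^k) := hsum1
          _ ≤ _ := hsum2
      rw [habs, hc₁]
      calc αS * (c/8) * (x * -Real.log x) = αS * (c/8 * (x * -Real.log x)) := by ring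
        _ ≤ αS * ∑' k : ℕ, (k:ℝ) * p k * (1 - (1-x)^k) :=
            mul_le_mul_of_nonneg_left hTlow hαS.le
    · -- UPPER BOUND
      have hL1 : 1 ≤ -Real.log x := by linarith
      have hhead : ∑ k ∈ Finset.range (n+1), (k:ℝ) * p k * (1 - (1-x)^k)
          ≤ x * ((N:ℝ)^2 + 2*c*(1 + -Real.log x)) := by
        have step1 : ∑ k ∈ Finset.range (n+1), (k:ℝ) * p k * (1 - (1-x)^k)
            ≤ ∑ k ∈ Finset.range (n+1), (k:ℝ)^2 * p k * x := by
          apply Finset.sum_le_sum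
          intro k _
          have h1 := aux_upper x hx1.le k
          have hkp : (0:ℝ) ≤ (k:ℝ) * p k := mul_nonneg (Nat.cast_nonneg k) (hp k)
          calc (k:ℝ) * p k * (1 - (1-x)^k) ≤ (k:ℝ) * p k * ((k:ℝ) * x) :=
                mul_le_mul_of_nonneg_left h1 hkp
            _ = (k:ℝ)^2 * p k * x := by ring
        have step2 : ∑ k ∈ Finset.range (n+1), (k:ℝ)^2 * p k * x
            = x * ∑ k ∈ Finset.range (n+1), (k:ℝ)^2 * p k := by
          rw [Finset.mul_sum]
          apply Finset.sum_congr rfl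
          intros
          ring
        have hsplit2 : (∑ k ∈ Finset.Ico 0 N, ((k:ℝ)^2 * p k))
              + ∑ k ∈ Finset.Ico N (n+1), ((k:ℝ)^2 * p k)
            = ∑ k ∈ Finset.Ico 0 (n+1), ((k:ℝ)^2 * p k) :=
          Finset.sum_Ico_consecutive _ (Nat.zero_le _) (by omega)
        have hA : ∑ k ∈ Finset.Ico 0 N, (k:ℝ)^2 * p k ≤ (N:ℝ)^2 := by
          calc ∑ k ∈ Finset.Ico 0 N, (k:ℝ)^2 * p k
              ≤ ∑ k ∈ Finset.Ico 0 N, (N:ℝ)^2 * p k := by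
                apply Finset.sum_le_sum
                intro k hk
                rw [Finset.mem_Ico] at hk
                have h1 : (k:ℝ) ≤ (N:ℝ) := by exact_mod_cast hk.2.le
                have h2 := hp k
                have h3 : (k:ℝ)*(k:ℝ) ≤ (N:ℝ)*(N:ℝ) := mul_self_le_mul_self (Nat.cast_nonneg k) h1
                nlinarith [mul_le_mul_of_nonneg_right h3 h2]
            _ = (N:ℝ)^2 * ∑ k ∈ Finset.Ico 0 N, p k := by rw [Finset.mul_sum]
            _ ≤ (N:ℝ)^2 * 1 := by
                apply mul_le_mul_of_nonneg_left ?_ (by positivity)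
                rw [← hpsum]
                exact Summable.sum_le_tsum _ (fun i _ => hp i) hP
            _ = (N:ℝ)^2 := mul_one _
        have hB : ∑ k ∈ Finset.Ico N (n+1), (k:ℝ)^2 * p k ≤ 2*c*(1 + -Real.log x) := by
          calc ∑ k ∈ Finset.Ico N (n+1), (k:ℝ)^2 * p k
              ≤ ∑ k ∈ Finset.Ico N (n+1), 2*c*((k:ℝ))⁻¹ := by
                apply Finset.sum_le_sum
                intro k hk
                rw [Finset.mem_Ico] at hk
                exact ha_hi k hk.1
            _ = 2*c * ∑ k ∈ Finset.Ico N (n+1), ((k:ℝ))⁻¹ := by rw [Finset.mul_sum]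
            _ ≤ 2*c * ∑ k ∈ Finset.Ioc 0 n, ((k:ℝ))⁻¹ := by
                apply mul_le_mul_of_nonneg_left ?_ (by positivity)
                apply Finset.sum_le_sum_of_subset_of_nonneg
                · intro k hk
                  rw [Finset.mem_Ico] at hk
                  rw [Finset.mem_Ioc]
                  omega
                · intro k _ _
                  positivity
            _ ≤ 2*c * (1 + Real.log (n:ℝ)) := by
                apply mul_le_mul_of_nonneg_left ?_ (by positivity)
                rw [← hharm]
                exact_mod_cast harmonic_le_one_add_log n
            _ ≤ 2*c*(1 + -Real.log x) := by
                apply mul_le_mul_of_nonneg_left ?_ (by positivity)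
                have hn0 : (0:ℝ) < (n:ℝ) := by
                  have : 0 < n := by omega
                  exact_mod_cast this
                have h1 := Real.log_le_log hn0 hn1
                rw [Real.log_inv] at h1
                linarith
        calc ∑ k ∈ Finset.range (n+1), (k:ℝ) * p k * (1 - (1-x)^k)
            ≤ ∑ k ∈ Finset.range (n+1), (k:ℝ)^2 * p k * x := step1
          _ = x * ∑ k ∈ Finset.range (n+1), (k:ℝ)^2 * p k := step2
          _ = x * ∑ k ∈ Finset.Ico 0 (n+1), (k:ℝ)^2 * p k := by
              rw [Finset.range_eq_Ico]
          _ = x * ((∑ k ∈ Finset.Ico 0 N, ((k:ℝ)^2 * p k))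
              + ∑ k ∈ Finset.Ico N (n+1), ((k:ℝ)^2 * p k)) := by rw [hsplit2]
          _ ≤ x * ((N:ℝ)^2 + 2*c*(1 + -Real.log x)) := by
              apply mul_le_mul_of_nonneg_left ?_ hx.le
              linarith [hA, hB]
      have htail2 : ∑' k : ℕ, ((k+(n+1):ℕ):ℝ) * p (k+(n+1)) * (1-(1-x)^(k+(n+1)))
          ≤ 4*c*x := by
        apply Real.tsum_le_of_sum_range_le (fun i => hnn _)
        intro m
        have hstep : ∀ i ∈ Finset.range m,
            ((i+(n+1):ℕ):ℝ) * p (i+(n+1)) * (1-(1-x)^(i+(n+1)))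
              ≤ 2*c*((((i+(n+1):ℕ)):ℝ)^2)⁻¹ := by
          intro i _
          have hiN : N ≤ i+(n+1) := by omega
          have h1 := hq_hi (i+(n+1)) hiN
          have h0 : (0:ℝ) ≤ (1-x)^(i+(n+1)) := pow_nonneg (by linarith) _
          have hkp : (0:ℝ) ≤ ((i+(n+1):ℕ):ℝ) * p (i+(n+1)) :=
            mul_nonneg (Nat.cast_nonneg _) (hp _)
          calc ((i+(n+1):ℕ):ℝ) * p (i+(n+1)) * (1-(1-x)^(i+(n+1)))
              ≤ ((i+(n+1):ℕ):ℝ) * p (i+(n+1)) * 1 :=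
                mul_le_mul_of_nonneg_left (by linarith) hkp
            _ = ((i+(n+1):ℕ):ℝ) * p (i+(n+1)) := mul_one _
            _ ≤ _ := h1
        calc ∑ i ∈ Finset.range m, ((i+(n+1):ℕ):ℝ) * p (i+(n+1)) * (1-(1-x)^(i+(n+1)))
            ≤ ∑ i ∈ Finset.range m, 2*c*((((i+(n+1):ℕ)):ℝ)^2)⁻¹ :=
              Finset.sum_le_sum hstep
          _ = 2*c * ∑ i ∈ Finset.range m, ((((i+(n+1):ℕ)):ℝ)^2)⁻¹ := by
              rw [Finset.mul_sum]
          _ ≤ 2*c * (2/((n:ℝ)+1)) := by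
              apply mul_le_mul_of_nonneg_left ?_ (by positivity)
              have hre : ∑ i ∈ Finset.range m, ((((i+(n+1):ℕ)):ℝ)^2)⁻¹
                  = ∑ k ∈ Finset.Ioo n (n+1+m), (((k:ℝ))^2)⁻¹ := by
                rw [show Finset.Ioo n (n+1+m) = Finset.Ico (n+1) (n+1+m) by
                  ext k; simp only [Finset.mem_Ioo, Finset.mem_Ico]; omega]
                rw [Finset.sum_Ico_eq_sum_range]
                simp only [Nat.add_sub_cancel_left]
                apply Finset.sum_congr rfl
                intro i _
                have : n+1+i = i+(n+1) := by omega
                rw [this]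
              rw [hre]
              have h2 := sum_Ioo_inv_sq_le (α := ℝ) n (n+1+m)
              convert h2 using 2
          _ ≤ 4*c*x := by
              rw [show 2*c*(2/((n:ℝ)+1)) = 4*c/((n:ℝ)+1) by ring,
                div_le_iff₀ (by positivity)]
              have hx1n : 1 ≤ x * ((n:ℝ)+1) := by
                have h3 := mul_le_mul_of_nonneg_left hn2.le hx.le
                rw [mul_inv_cancel₀ hx.ne'] at h3
                linarith
              nlinarith
      have hub : ∑' k : ℕ, (k:ℝ) * p k * (1 - (1-x)^k)
          ≤ ((N:ℝ)^2 + 8*c) * (x * -Real.log x) := by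
        rw [← hT.sum_add_tsum_nat_add (n+1)]
        have hxl : (0:ℝ) ≤ x * (-Real.log x - 1) :=
          mul_nonneg hx.le (by linarith)
        nlinarith [hhead, htail2, sq_nonneg (N:ℝ), hc.le, hxl]
      rw [habs, hc₂]
      calc αS * ∑' k : ℕ, (k:ℝ) * p k * (1 - (1-x)^k)
          ≤ αS * (((N:ℝ)^2 + 8*c) * (x * -Real.log x)) :=
            mul_le_mul_of_nonneg_left hub hαS.le
        _ = αS * ((N:ℝ)^2 + 8*c) * (x * -Real.log x) := by ring
  -- non-integrability
  have hnonint : ∀ y ∈ Set.Ioo (0:ℝ) x₀,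
      ¬ MeasureTheory.IntegrableOn (fun x => (hS 1 - hS (1 - x))⁻¹) (Set.Ioo 0 y) := by
    intro y hy hint
    have hy0 : 0 < y := hy.1
    have hylt1 : y < 1 := lt_trans hy.2 hx₀lt1
    apply aux_nonint y hy0 hylt1
    have hkey : ∀ x ∈ Set.Ioo (0:ℝ) y,
        (c₂*(x*|Real.log x|))⁻¹ ≤ (hS 1 - hS (1-x))⁻¹ := by
      intro x hxy
      have hxm : x ∈ Set.Ioo (0:ℝ) x₀ := ⟨hxy.1, lt_trans hxy.2 hy.2⟩
      obtain ⟨hlow, hupp⟩ := hmain x hxm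
      have hxpos := hxy.1
      have hx1 : x < 1 := lt_trans hxm.2 hx₀lt1
      have hlabs : 0 < |Real.log x| := abs_pos.2 (ne_of_lt (Real.log_neg hxpos hx1))
      have hdpos : 0 < hS 1 - hS (1-x) :=
        lt_of_lt_of_le (by positivity) hlow
      exact inv_anti₀ hdpos hupp
    have hψ'int : IntegrableOn (fun x => (c₂*(x*|Real.log x|))⁻¹) (Set.Ioo 0 y) := by
      apply MeasureTheory.Integrable.mono' hint ?_ ?_
      · apply Measurable.aestronglyMeasurable
        exact (measurable_const.mul (measurable_id.mul Real.measurable_log.abs)).inv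
      · filter_upwards [ae_restrict_mem measurableSet_Ioo] with t ht
        have h := hkey t ht
        have hnn : 0 ≤ (c₂*(t*|Real.log t|))⁻¹ := by
          have ht0 : (0:ℝ) < t := ht.1
          positivity
        rw [Real.norm_eq_abs, abs_of_nonneg hnn]
        exact h
    have heq : (fun x : ℝ => (x*|Real.log x|)⁻¹)
        = fun x => c₂ * (c₂*(x*|Real.log x|))⁻¹ := by
      funext t
      have hne : c₂ ≠ 0 := ne_of_gt hc₂pos
      rcases eq_or_ne (t*|Real.log t|) 0 with h|h
      · rw [h]
        simp
      · field_simp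
    rw [heq]
    exact hψ'int.const_mul c₂
  exact ⟨c₁, c₂, x₀, hc₁pos, hc₁₂, hx₀pos, hx₀lt1, hmain, hnonint⟩
end

section
/- Let θ_t solve dθ_t/dt = -β θ_t p_I(θ_t) with p_I, p_S as above. Then p_I(θ_t) satisfies d/dt[p_I(θ_t)] = p_I(θ_t)( -(ρ+β) + β p_I(θ_t) + β p_S(θ_t) θ_t g_S''(θ_t)/g_S'(θ_t) ). -/
open scoped BigOperators

lemma sumr1 {r : ℝ} (hr0 : 0 < r) (hr : r < 1) :
    Summable (fun k : ℕ => (k : ℝ) * r ^ (k - 1)) := by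
  rw [← summable_nat_add_iff 1]
  have h1 : Summable (fun k : ℕ => (k : ℝ) ^ 1 * r ^ k) :=
    summable_pow_mul_geometric_of_norm_lt_one 1 (by rw [Real.norm_eq_abs, abs_of_pos hr0]; exact hr)
  have h2 : Summable (fun k : ℕ => r ^ k) :=
    summable_geometric_of_lt_one hr0.le hr
  refine (h1.add h2).congr fun k => ?_
  push_cast
  simp [pow_one]
  ring

lemma sumr2 {r : ℝ} (hr0 : 0 < r) (hr : r < 1) :
    Summable (fun k : ℕ => (k : ℝ) * ((k - 1 : ℕ) : ℝ) * r ^ (k - 1 - 1)) := by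
  rw [← summable_nat_add_iff 2]
  have hn : ‖r‖ < 1 := by rw [Real.norm_eq_abs, abs_of_pos hr0]; exact hr
  have h1 : Summable (fun k : ℕ => (k : ℝ) ^ 2 * r ^ k) :=
    summable_pow_mul_geometric_of_norm_lt_one 2 hn
  have h2 : Summable (fun k : ℕ => 3 * ((k : ℝ) ^ 1 * r ^ k)) :=
    (summable_pow_mul_geometric_of_norm_lt_one 1 hn).mul_left 3
  have h3 : Summable (fun k : ℕ => 2 * r ^ k) :=
    (summable_geometric_of_lt_one hr0.le hr).mul_left 2
  refine ((h1.add h2).add h3).congr fun k => ?_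
  have e1 : k + 2 - 1 = k + 1 := rfl
  rw [e1, Nat.add_sub_cancel]
  push_cast
  ring

lemma hasDerivAt_pgf (p : ℕ → ℝ) (hp : ∀ k, 0 ≤ p k) (hp1 : ∀ k, p k ≤ 1)
    {r x : ℝ} (hr0 : 0 < r) (hr : r < 1) (hx : x ∈ Set.Ioo (-r) r) :
    HasDerivAt (fun θ : ℝ => ∑' k : ℕ, p k * θ ^ k)
      (∑' k : ℕ, p k * ((k : ℝ) * x ^ (k - 1))) x := by
  have h0 : (0:ℝ) ∈ Set.Ioo (-r) r := ⟨by linarith, hr0⟩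
  refine hasDerivAt_tsum_of_isPreconnected (u := fun k : ℕ => (k : ℝ) * r ^ (k - 1))
    (sumr1 hr0 hr) isOpen_Ioo isPreconnected_Ioo
    (fun n y _ => (hasDerivAt_pow n y).const_mul (p n)) ?_ h0 ?_ hx
  · intro n y hy
    have hyr : |y| ≤ r := le_of_lt (abs_lt.2 ⟨hy.1, hy.2⟩)
    have h1 : ‖p n * ((n : ℝ) * y ^ (n - 1))‖ = p n * ((n : ℝ) * |y| ^ (n - 1)) := by
      rw [norm_mul, norm_mul, norm_pow, Real.norm_eq_abs, Real.norm_eq_abs, Real.norm_eq_abs,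
        abs_of_nonneg (hp n), Nat.abs_cast]
    rw [h1]
    calc p n * ((n : ℝ) * |y| ^ (n - 1)) ≤ 1 * ((n : ℝ) * r ^ (n - 1)) := by
          apply mul_le_mul (hp1 n) _ _ zero_le_one
          · exact mul_le_mul_of_nonneg_left (pow_le_pow_left₀ (abs_nonneg y) hyr _) n.cast_nonneg
          · positivity
      _ = (n : ℝ) * r ^ (n - 1) := one_mul _
  · apply summable_of_ne_finset_zero (s := ({0} : Finset ℕ))
    intro n hn
    simp only [Finset.mem_singleton] at hn
    rw [zero_pow hn, mul_zero]

lemma hasDerivAt_pgf' (p : ℕ → ℝ) (hp : ∀ k, 0 ≤ p k) (hp1 : ∀ k, p k ≤ 1)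
    {r x : ℝ} (hr0 : 0 < r) (hr : r < 1) (hx : x ∈ Set.Ioo (-r) r) :
    HasDerivAt (fun θ : ℝ => ∑' k : ℕ, p k * ((k : ℝ) * θ ^ (k - 1)))
      (∑' k : ℕ, p k * (k : ℝ) * ((k - 1 : ℕ) : ℝ) * x ^ (k - 1 - 1)) x := by
  have h0 : (0:ℝ) ∈ Set.Ioo (-r) r := ⟨by linarith, hr0⟩
  refine hasDerivAt_tsum_of_isPreconnected
    (u := fun k : ℕ => (k : ℝ) * ((k - 1 : ℕ) : ℝ) * r ^ (k - 1 - 1))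
    (sumr2 hr0 hr) isOpen_Ioo isPreconnected_Ioo
    (g' := fun n y => p n * (n : ℝ) * ((n - 1 : ℕ) : ℝ) * y ^ (n - 1 - 1))
    (fun n y _ => by
      have h := (hasDerivAt_pow (n - 1) y).const_mul (p n * (n : ℝ))
      simpa [mul_assoc] using h) ?_ h0 ?_ hx
  · intro n y hy
    have hyr : |y| ≤ r := le_of_lt (abs_lt.2 ⟨hy.1, hy.2⟩)
    have h1 : ‖p n * (n : ℝ) * ((n - 1 : ℕ) : ℝ) * y ^ (n - 1 - 1)‖
        = p n * (n : ℝ) * ((n - 1 : ℕ) : ℝ) * |y| ^ (n - 1 - 1) := by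
      rw [norm_mul, norm_mul, norm_mul, norm_pow, Real.norm_eq_abs, Real.norm_eq_abs,
        Real.norm_eq_abs, Real.norm_eq_abs, abs_of_nonneg (hp n), Nat.abs_cast, Nat.abs_cast]
    rw [h1]
    calc p n * (n : ℝ) * ((n - 1 : ℕ) : ℝ) * |y| ^ (n - 1 - 1)
        ≤ 1 * (n : ℝ) * ((n - 1 : ℕ) : ℝ) * r ^ (n - 1 - 1) := by
          apply mul_le_mul _ (pow_le_pow_left₀ (abs_nonneg y) hyr _) (by positivity) (by positivity)
          apply mul_le_mul_of_nonneg_right (mul_le_mul_of_nonneg_right (hp1 n) n.cast_nonneg)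
            (Nat.cast_nonneg _)
      _ = (n : ℝ) * ((n - 1 : ℕ) : ℝ) * r ^ (n - 1 - 1) := by ring
  · apply summable_of_ne_finset_zero (s := ({0, 1} : Finset ℕ))
    intro n hn
    simp only [Finset.mem_insert, Finset.mem_singleton] at hn
    push_neg at hn
    have : n - 1 ≠ 0 := by omega
    rw [zero_pow this]; ring

set_option maxHeartbeats 1600000 in
/-- Volz equation for `p_I`: if `θ_t` solves `θ' = -β θ p_I(θ)`, then
`d/dt[p_I(θ_t)] = p_I(θ_t)(-(ρ+β) + β p_I(θ_t) + β p_S(θ_t) θ_t gS''(θ_t)/gS'(θ_t))`. -/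
theorem sir_volz_pI (p : ℕ → ℝ) (αS μ β ρ μR θinf : ℝ)
    (hp : ∀ k, 0 ≤ p k) (hpsum : ∑' k : ℕ, p k = 1)
    (h2 : Summable fun k : ℕ => (k : ℝ) ^ 2 * p k)
    (hαS : 0 < αS) (hμ : 0 < μ) (hβ : 0 < β) (hρ : 0 ≤ ρ) (hμR : 0 ≤ μR)
    (hθinf : θinf ∈ Set.Ioo (0:ℝ) 1)
    (gS hS hX hR hI pI pS : ℝ → ℝ)
    (hgSdef : ∀ θ, gS θ = ∑' k : ℕ, p k * θ ^ k)
    (hSdef : ∀ θ, hS θ = αS * θ * deriv gS θ)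
    (hXdef : ∀ θ, hX θ = μ * θ ^ 2)
    (hRdef : ∀ θ, hR θ = μR * θ + μ * ρ / β * (θ * (1 - θ)))
    (hIdef : ∀ θ, hI θ = hX θ - hS θ - hR θ)
    (hpIdef : ∀ θ, pI θ = hI θ / hX θ)
    (hpSdef : ∀ θ, pS θ = hS θ / hX θ)
    (θt : ℝ → ℝ) (hrange : ∀ t, θt t ∈ Set.Ioo θinf 1)
    (hgS' : ∀ t, 0 < deriv gS (θt t))
    (hode : ∀ t, HasDerivAt θt (-β * θt t * pI (θt t)) t) :
    ∀ t, HasDerivAt (fun s => pI (θt s))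
      (pI (θt t) * (-(ρ + β) + β * pI (θt t) +
        β * pS (θt t) * (θt t * deriv (deriv gS) (θt t) / deriv gS (θt t)))) t := by
  -- basic positivity of θt
  have hθpos : ∀ s, 0 < θt s := fun s => lt_trans hθinf.1 (hrange s).1
  have hθne : ∀ s, θt s ≠ 0 := fun s => (hθpos s).ne'
  -- summability of p
  have hps : Summable p := by
    rw [← summable_nat_add_iff 1]
    have hshift : Summable (fun k : ℕ => ((k + 1 : ℕ) : ℝ) ^ 2 * p (k + 1)) :=
      (summable_nat_add_iff 1).2 h2
    refine Summable.of_nonneg_of_le (fun k => hp _) (fun k => ?_) hshift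
    have h1 : (1 : ℝ) ≤ ((k + 1 : ℕ) : ℝ) ^ 2 := by
      have : (1 : ℝ) ≤ ((k + 1 : ℕ) : ℝ) := by exact_mod_cast Nat.one_le_iff_ne_zero.2 (by omega)
      nlinarith
    nlinarith [hp (k + 1)]
  have hp1 : ∀ k, p k ≤ 1 := fun k => hpsum ▸ Summable.le_tsum hps k fun j _ => hp j
  have hgS : gS = fun θ => ∑' k : ℕ, p k * θ ^ k := funext hgSdef
  -- formula for pI
  have hPIeq : ∀ θ : ℝ, θ ≠ 0 →
      pI θ = 1 - αS * deriv gS θ / (μ * θ) - μR / (μ * θ) - ρ / β * ((1 - θ) / θ) := by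
    intro θ h0
    rw [hpIdef, hIdef, hXdef, hSdef, hRdef]
    field_simp
    ring
  intro t
  set x := θt t with hxdef
  have hx0 : 0 < x := hθpos t
  have hx1 : x < 1 := (hrange t).2
  set r : ℝ := (x + 1) / 2 with hrdef
  have hr0 : 0 < r := by rw [hrdef]; linarith
  have hr1 : r < 1 := by rw [hrdef]; linarith
  have hxIoo : x ∈ Set.Ioo (-r) r := ⟨by rw [hrdef]; linarith, by rw [hrdef]; linarith⟩
  -- first and second derivative of gS
  set g1 : ℝ → ℝ := fun θ => ∑' k : ℕ, p k * ((k : ℝ) * θ ^ (k - 1)) with hg1def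
  have hderiv_eq : ∀ y ∈ Set.Ioo (-r) r, deriv gS y = g1 y := by
    intro y hy
    rw [hgS]
    exact (hasDerivAt_pgf p hp hp1 hr0 hr1 hy).deriv
  set E : ℝ := ∑' k : ℕ, p k * (k : ℝ) * ((k - 1 : ℕ) : ℝ) * x ^ (k - 1 - 1) with hEdef
  have h2d : HasDerivAt g1 E x := hasDerivAt_pgf' p hp hp1 hr0 hr1 hxIoo
  have hev : deriv gS =ᶠ[nhds x] g1 :=
    Filter.eventually_of_mem (Ioo_mem_nhds hxIoo.1 hxIoo.2) hderiv_eq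
  have hD2 : HasDerivAt (deriv gS) E x := h2d.congr_of_eventuallyEq hev
  have hg2x : deriv (deriv gS) x = E := hD2.deriv
  -- abbreviations
  set D : ℝ := deriv gS x with hDdef
  have hDpos : 0 < D := hgS' t
  set v : ℝ := -β * x * pI x with hvdef
  have hodet : HasDerivAt θt v t := hode t
  have hμx : μ * x ≠ 0 := mul_ne_zero hμ.ne' hx0.ne'
  -- derivative of each piece
  have ha : HasDerivAt (fun s => deriv gS (θt s)) (E * v) t := hD2.comp t hodet
  have hb : HasDerivAt (fun s => μ * θt s) (μ * v) t := hodet.const_mul μ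
  have h1 : HasDerivAt (fun s => αS * deriv gS (θt s)) (αS * (E * v)) t := ha.const_mul αS
  have hdiv1 : HasDerivAt (fun s => αS * deriv gS (θt s) / (μ * θt s))
      ((αS * (E * v) * (μ * x) - αS * D * (μ * v)) / (μ * x) ^ 2) t := h1.div hb hμx
  have hdiv2 : HasDerivAt (fun s => μR / (μ * θt s))
      ((0 * (μ * x) - μR * (μ * v)) / (μ * x) ^ 2) t := (hasDerivAt_const t μR).div hb hμx
  have h3num : HasDerivAt (fun s => 1 - θt s) (-v) t := by
    have h := (hasDerivAt_const t (1:ℝ)).sub hodet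
    rw [zero_sub] at h
    exact h
  have hdiv3 : HasDerivAt (fun s => (1 - θt s) / θt s)
      ((-v * x - (1 - x) * v) / x ^ 2) t := h3num.div hodet hx0.ne'
  have h3 : HasDerivAt (fun s => ρ / β * ((1 - θt s) / θt s))
      (ρ / β * ((-v * x - (1 - x) * v) / x ^ 2)) t := hdiv3.const_mul (ρ / β)
  have total : HasDerivAt
      (fun s => 1 - αS * deriv gS (θt s) / (μ * θt s) - μR / (μ * θt s)
        - ρ / β * ((1 - θt s) / θt s))
      (-(((αS * (E * v) * (μ * x) - αS * D * (μ * v)) / (μ * x) ^ 2))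
        - (0 * (μ * x) - μR * (μ * v)) / (μ * x) ^ 2
        - ρ / β * ((-v * x - (1 - x) * v) / x ^ 2)) t := by
    exact ((hdiv1.const_sub 1).sub hdiv2).sub h3
  have hfun : (fun s => pI (θt s)) = (fun s => 1 - αS * deriv gS (θt s) / (μ * θt s)
      - μR / (μ * θt s) - ρ / β * ((1 - θt s) / θt s)) :=
    funext fun s => hPIeq (θt s) (hθne s)
  rw [hfun]
  convert total using 1
  -- remaining algebra
  have hpSx : pS x = αS * x * D / (μ * x ^ 2) := by rw [hpSdef, hSdef, hXdef]
  have hpIx : pI x = 1 - αS * D / (μ * x) - μR / (μ * x) - ρ / β * ((1 - x) / x) :=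
    hPIeq x hx0.ne'
  rw [hg2x, hpSx, hvdef, hpIx]
  field_simp
  ring
end
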